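/- Let M ≥ 2 and let w, w' be probability vectors on Fin M with entries ≥ ε for some 0 < ε ≤ 1/M, where w' is the near-one-hot vector (one entry 1 − (M−1)ε, rest ε) and w is any other vector in the constraint set. Then ∏_i w_i ≥ ∏_i w'_i, with equality iff w is a permutation of w'. Hence the near-one-hot vectors minimize the product of entries (equivalently maximize K(w) = −(1/M)∑ log(M w_i)) over the constraint set. -/

import Mathlib

open Finset

lemma ineq_aux {ι : Type*} [DecidableEq ι] (ε : ℝ) (hε : 0 < ε) (x : ι → ℝ)
    (hx : ∀ i, 0 ≤ x i) (s : Finset ι) :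
    ε ^ (s.card + 1) + ε ^ s.card * ∑ i ∈ s, x i ≤ ε * ∏ i ∈ s, (ε + x i) := by
  induction s using Finset.induction with
  | empty => simp
  | @insert a s ha ih =>
    rw [Finset.prod_insert ha, Finset.sum_insert ha, Finset.card_insert_of_notMem ha]
    have h1 : (0:ℝ) ≤ ε + x a := by have := hx a; linarith
    rw [pow_succ] at ih
    have h2 := mul_le_mul_of_nonneg_left ih h1
    have hs : (0:ℝ) ≤ ∑ i ∈ s, x i := Finset.sum_nonneg fun i _ => hx i
    have hp : (0:ℝ) ≤ ε ^ s.card := pow_pos hε _ |>.le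
    rw [pow_succ, pow_succ]
    nlinarith [mul_nonneg (mul_nonneg (hx a) hp) hs]

lemma strict_aux {ι : Type*} [DecidableEq ι] (ε : ℝ) (hε : 0 < ε) (x : ι → ℝ)
    (hx : ∀ i, 0 ≤ x i) (s : Finset ι) (a b : ι) (ha : a ∈ s) (hb : b ∈ s)
    (hab : a ≠ b) (hxa : 0 < x a) (hxb : 0 < x b) :
    ε ^ (s.card + 1) + ε ^ s.card * ∑ i ∈ s, x i < ε * ∏ i ∈ s, (ε + x i) := by
  have hbt : b ∈ s.erase a := Finset.mem_erase.2 ⟨hab.symm, hb⟩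
  have hSb : x b ≤ ∑ i ∈ s.erase a, x i := Finset.single_le_sum (fun i _ => hx i) hbt
  have h := ineq_aux ε hε x hx (s.erase a)
  have h1 : (0:ℝ) ≤ ε + x a := by linarith
  rw [pow_succ] at h
  have h2 := mul_le_mul_of_nonneg_left h h1
  rw [← Finset.insert_erase ha, Finset.prod_insert (Finset.notMem_erase a s),
    Finset.sum_insert (Finset.notMem_erase a s),
    Finset.card_insert_of_notMem (Finset.notMem_erase a s)]
  have hp : (0:ℝ) < ε ^ (s.erase a).card := pow_pos hε _
  rw [pow_succ, pow_succ]
  nlinarith [mul_pos (mul_pos hxa hp) (lt_of_lt_of_le hxb hSb)]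

theorem prod_minimized_by_near_onehot (M : ℕ) (hM : 2 ≤ M) (ε : ℝ) (hε : 0 < ε)
    (hεM : ε ≤ 1 / M) (j : Fin M)
    (w' : Fin M → ℝ) (hw' : w' = fun i => if i = j then 1 - ((M : ℝ) - 1) * ε else ε)
    (w : Fin M → ℝ) (hge : ∀ i, ε ≤ w i) (hsum : ∑ i, w i = 1) :
    ∏ i, w' i ≤ ∏ i, w i ∧
    (∏ i, w i = ∏ i, w' i ↔ ∃ σ : Equiv.Perm (Fin M), ∀ i, w i = w' (σ i)) := by
  set x : Fin M → ℝ := fun i => w i - ε with hxdef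
  have hx : ∀ i, 0 ≤ x i := fun i => by simp [hxdef]; linarith [hge i]
  have hMpos : (0:ℝ) < M := by positivity
  have hcard : (Finset.univ : Finset (Fin M)).card = M := by simp
  have hprodw : ∏ i, (ε + x i) = ∏ i, w i :=
    Finset.prod_congr rfl fun i _ => by simp [hxdef]
  have hsumx : ∑ i, x i = 1 - M * ε := by
    simp [hxdef, Finset.sum_sub_distrib, hsum, hcard, mul_comm]
  have hM1 : M - 1 + 1 = M := by omega
  -- product of w'
  have hprod' : ∏ i, w' i = (1 - ((M:ℝ) - 1) * ε) * ε ^ (M - 1) := by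
    subst hw'
    rw [← Finset.mul_prod_erase Finset.univ _ (Finset.mem_univ j)]
    simp only [if_pos rfl]
    congr 1
    rw [Finset.prod_congr rfl (fun i hi => if_neg (Finset.mem_erase.1 hi).1),
      Finset.prod_const, Finset.card_erase_of_mem (Finset.mem_univ j), hcard]
  have hkey : ε * ∏ i, w' i = ε ^ (M + 1) + ε ^ M * ∑ i, x i := by
    rw [hprod', hsumx]
    have e1 : ε ^ M = ε ^ (M-1) * ε := by rw [← pow_succ, hM1]
    have e2 : ε ^ (M+1) = ε ^ (M-1) * ε * ε := by rw [← pow_succ, ← pow_succ, hM1]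
    rw [e1, e2]; ring
  have hineq := ineq_aux ε hε x hx Finset.univ
  rw [hcard, hprodw] at hineq
  have hle : ∏ i, w' i ≤ ∏ i, w i := by
    have : ε * ∏ i, w' i ≤ ε * ∏ i, w i := by rw [hkey]; exact hineq
    exact le_of_mul_le_mul_left this hε
  refine ⟨hle, ?_, ?_⟩
  · -- equality → permutation
    intro heq
    have hpair : ∀ a b : Fin M, a ≠ b → x a = 0 ∨ x b = 0 := by
      by_contra hcon
      push_neg at hcon
      obtain ⟨a, b, hab, ha0, hb0⟩ := hcon
      have hstrict := strict_aux ε hε x hx Finset.univ a b (Finset.mem_univ a)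
        (Finset.mem_univ b) hab (lt_of_le_of_ne (hx a) (Ne.symm ha0))
        (lt_of_le_of_ne (hx b) (Ne.symm hb0))
      rw [hcard, hprodw] at hstrict
      rw [← hkey, heq] at hstrict
      exact lt_irrefl _ hstrict
    by_cases hex : ∃ k, x k ≠ 0
    · obtain ⟨k, hk⟩ := hex
      have hzero : ∀ i, i ≠ k → x i = 0 := fun i hik =>
        (hpair i k hik).resolve_right hk
      have hsk : ∑ i, x i = x k :=
        Finset.sum_eq_single_of_mem k (Finset.mem_univ k) (fun i _ hi => hzero i hi)
      have hwk : w k = 1 - ((M:ℝ) - 1) * ε := by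
        have : x k = 1 - M * ε := by rw [← hsk, hsumx]
        simp only [hxdef] at this; linarith
      refine ⟨Equiv.swap k j, fun i => ?_⟩
      by_cases hik : i = k
      · rw [hik, Equiv.swap_apply_left, hw']
        simp only [if_pos rfl]
        rw [← hik] at hwk ⊢
        exact hwk
      · have hxi := hzero i hik
        have hwi : w i = ε := by simp only [hxdef] at hxi; linarith
        by_cases hij : i = j
        · have hkj : ¬ k = j := fun h => hik (hij.trans h.symm)
          rw [hij, Equiv.swap_apply_right, hw']
          simp only [if_neg hkj]
          rw [← hij]; exact hwi
        · rw [Equiv.swap_apply_of_ne_of_ne hik hij, hw']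
          simp only [if_neg hij]
          exact hwi
    · push_neg at hex
      have hwε : ∀ i, w i = ε := fun i => by have := hex i; simp only [hxdef] at this; linarith
      have hS0 : (1:ℝ) - M * ε = 0 := by
        rw [← hsumx]; exact Finset.sum_eq_zero fun i _ => hex i
      refine ⟨Equiv.refl _, fun i => ?_⟩
      rw [hw']
      by_cases hij : i = j
      · simp [hij, hwε i]; linarith [hwε j]
      · simp [hij, hwε i]
  · -- permutation → equality
    rintro ⟨σ, hσ⟩
    rw [Finset.prod_congr rfl fun i _ => hσ i]
    exact Equiv.prod_comp σ w'
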